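/- arXiv:2401.06083 — 2 statements merged into one kernel-verified Lean document; each statement's English description precedes it below -/
import Mathlib

section
/- Let σ ≥ 0 and Y := {{ψ_k}_k ∈ L log^{σ/2}L([0,1]; ℓ²) : D_k ψ_k = 0 for all k}. If {g_k}_k ∈ exp(L^{2/σ})([0,1]; ℓ²) annihilates Y, i.e. ∫ Σ_k g_k ψ_k = 0 for all {ψ_k}_k ∈ Y, then D_k g_k = g_k for every k. -/
open MeasureTheory Real Set

noncomputable section

/-- The Young function `B_σ(t) = t (log(e + t))^σ`. -/
noncomputable def Bfun (σ t : ℝ) : ℝ := t * (Real.log (Real.exp 1 + t)) ^ σ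

/-- Dyadic conditional expectation on `[0,1]`: `E_k f` is the average of `f` on the dyadic
interval of length `2^{-k}` containing `x`. -/
noncomputable def Ek (k : ℕ) (f : ℝ → ℝ) (x : ℝ) : ℝ :=
  (2:ℝ)^k * ∫ y in Set.Ico ((⌊x * 2^k⌋ : ℝ) / 2^k) ((⌊x * 2^k⌋ + 1 : ℝ) / 2^k), f y

/-- Dyadic martingale differences: `D_0 f = E_0 f`, `D_{k+1} f = E_{k+1} f − E_k f`. -/
noncomputable def Dk : ℕ → (ℝ → ℝ) → ℝ → ℝ
  | 0 => fun f => Ek 0 f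
  | (k+1) => fun f x => Ek (k+1) f x - Ek k f x

/-- The dyadic martingale square function `S_M f = (Σ_{k ≥ 1} |D_k f|²)^{1/2}`. -/
noncomputable def SM (f : ℝ → ℝ) (x : ℝ) : ℝ := Real.sqrt (∑' k : ℕ, (Dk (k+1) f x)^2)

/-- The `L^p([0,1])` norm. -/
noncomputable def pNorm (p : ℝ) (f : ℝ → ℝ) : ℝ :=
  (∫ x in Set.Ioc (0:ℝ) 1, |f x| ^ p) ^ (1/p)

/-- The Luxemburg norm on `[0,1]` associated with a Young function `Φ`. -/
noncomputable def luxNorm01 (Φ : ℝ → ℝ) (f : ℝ → ℝ) : ℝ :=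
  sInf {lam : ℝ | 0 < lam ∧ (∫ x in Set.Ioc (0:ℝ) 1, Φ (|f x| / lam)) ≤ 1}

/-- dyadic interval -/
def dI (k : ℕ) (n : ℤ) : Set ℝ := Set.Ico ((n : ℝ)/2^k) (((n : ℝ)+1)/2^k)

lemma Ek_eval (k : ℕ) (f : ℝ → ℝ) (x : ℝ) :
    Ek k f x = 2^k * ∫ y in dI k ⌊x * 2^k⌋, f y := rfl

lemma floor_eq_of_mem {k : ℕ} {n : ℤ} {x : ℝ} (hx : x ∈ dI k n) : ⌊x * 2^k⌋ = n := by
  have h2 : (0:ℝ) < 2^k := by positivity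
  rcases hx with ⟨h1, h2'⟩
  rw [Int.floor_eq_iff]
  constructor
  · rwa [div_le_iff₀ h2] at h1
  · rwa [lt_div_iff₀ h2] at h2'

lemma mem_dI_floor (k : ℕ) (x : ℝ) : x ∈ dI k ⌊x * 2^k⌋ := by
  have h2 : (0:ℝ) < 2^k := by positivity
  constructor
  · rw [div_le_iff₀ h2]; exact Int.floor_le _
  · rw [lt_div_iff₀ h2]; exact Int.lt_floor_add_one _

lemma Ek_const_on {k : ℕ} {n : ℤ} {x : ℝ} (f : ℝ → ℝ) (hx : x ∈ dI k n) :
    Ek k f x = 2^k * ∫ y in dI k n, f y := by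
  rw [Ek_eval, floor_eq_of_mem hx]

lemma vol_dI (k : ℕ) (n : ℤ) : volume (dI k n) = ENNReal.ofReal ((2:ℝ)⁻¹^k) := by
  rw [dI, Real.volume_Ico]
  congr 1
  field_simp
  rw [← mul_pow]; norm_num

lemma meas_dI (k : ℕ) (n : ℤ) : MeasurableSet (dI k n) := measurableSet_Ico

lemma Ek_of_const_on {k : ℕ} {n : ℤ} {x : ℝ} {f : ℝ → ℝ} {c : ℝ}
    (hc : ∀ y ∈ dI k n, f y = c) (hx : x ∈ dI k n) : Ek k f x = c := by
  rw [Ek_const_on f hx, setIntegral_congr_fun (meas_dI k n) hc, setIntegral_const,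
    measureReal_def, vol_dI, ENNReal.toReal_ofReal (by positivity), smul_eq_mul]
  rw [← mul_assoc, ← mul_pow]
  norm_num

lemma dI_split (k : ℕ) (n : ℤ) : dI k n = dI (k+1) (2*n) ∪ dI (k+1) (2*n+1) := by
  have h1 : ((2*n : ℤ) : ℝ)/2^(k+1) = (n:ℝ)/2^k := by push_cast; ring
  have h2 : (((2*n : ℤ) : ℝ)+1)/2^(k+1) = (((2*n+1 : ℤ) : ℝ))/2^(k+1) := by push_cast; ring
  have h3 : (((2*n+1 : ℤ) : ℝ)+1)/2^(k+1) = ((n:ℝ)+1)/2^k := by push_cast; ring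
  rw [dI, dI, dI, h1, h2, h3, Set.Ico_union_Ico_eq_Ico]
  · rw [← h1, ← h2]
    apply div_le_div_of_nonneg_right ?_ (by positivity)
    push_cast; linarith
  · rw [← h2, ← h3]
    apply div_le_div_of_nonneg_right ?_ (by positivity)
    push_cast; linarith

lemma disj_dI (k : ℕ) (n : ℤ) : Disjoint (dI (k+1) (2*n)) (dI (k+1) (2*n+1)) := by
  apply Set.Ico_disjoint_Ico_same.mono_right (Set.Ico_subset_Ico_left ?_)
  push_cast
  apply div_le_div_of_nonneg_right ?_ (by positivity)
  linarith

lemma exists_parent (k : ℕ) (m : ℤ) : ∃ j : ℤ, dI (k+1) m ⊆ dI k j := by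
  rcases Int.even_or_odd m with ⟨j, hj⟩ | ⟨j, hj⟩
  · exact ⟨j, by rw [dI_split k j]; subst hj; rw [two_mul]; exact Set.subset_union_left⟩
  · exact ⟨j, by rw [dI_split k j]; subst hj; exact Set.subset_union_right⟩

lemma intOn_Ek_self (k : ℕ) (f : ℝ → ℝ) (n : ℤ) : IntegrableOn (Ek k f) (dI k n) := by
  have : EqOn (Ek k f) (fun _ => 2^k * ∫ y in dI k n, f y) (dI k n) :=
    fun y hy => Ek_const_on f hy
  exact (integrableOn_const (s := dI k n) (μ := volume) (by rw [vol_dI]; exact ENNReal.ofReal_ne_top)).congr_fun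
    this.symm (meas_dI k n)

lemma intOn_Ek_succ (k : ℕ) (f : ℝ → ℝ) (n : ℤ) : IntegrableOn (Ek (k+1) f) (dI k n) := by
  rw [dI_split k n]
  exact (intOn_Ek_self (k+1) f (2*n)).union (intOn_Ek_self (k+1) f (2*n+1))

lemma intOn_Ek_child (k : ℕ) (f : ℝ → ℝ) (m : ℤ) : IntegrableOn (Ek k f) (dI (k+1) m) := by
  obtain ⟨j, hj⟩ := exists_parent k m
  exact (intOn_Ek_self k f j).mono_set hj

lemma Ek_measurable (k : ℕ) (f : ℝ → ℝ) : Measurable (Ek k f) := by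
  have : Ek k f = (fun n : ℤ => 2^k * ∫ y in dI k n, f y) ∘ (fun x => ⌊x * 2^k⌋) := by
    funext x; exact Ek_eval k f x
  rw [this]
  exact (measurable_of_countable _).comp (Int.measurable_floor.comp (measurable_mul_const _))

lemma Ek_sub {k : ℕ} {f g : ℝ → ℝ} {x : ℝ} (hf : IntegrableOn f (dI k ⌊x * 2^k⌋))
    (hg : IntegrableOn g (dI k ⌊x * 2^k⌋)) :
    Ek k (fun y => f y - g y) x = Ek k f x - Ek k g x := by
  rw [Ek_eval, Ek_eval, Ek_eval, integral_sub hf hg]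
  ring

lemma EkEk_self (k : ℕ) (f : ℝ → ℝ) (x : ℝ) : Ek k (Ek k f) x = Ek k f x := by
  apply Ek_of_const_on (n := ⌊x * 2^k⌋) ?_ (mem_dI_floor k x)
  intro y hy
  rw [Ek_const_on f hy, ← Ek_const_on f (mem_dI_floor k x)]

lemma EkEk_coarse (k : ℕ) (f : ℝ → ℝ) (x : ℝ) : Ek (k+1) (Ek k f) x = Ek k f x := by
  obtain ⟨j, hj⟩ := exists_parent k ⌊x * 2^(k+1)⌋
  apply Ek_of_const_on (n := ⌊x * 2^(k+1)⌋) ?_ (mem_dI_floor (k+1) x)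
  intro y hy
  rw [Ek_const_on f (hj hy), ← Ek_const_on f (hj (mem_dI_floor (k+1) x))]

lemma EkEk_fine (k : ℕ) (f : ℝ → ℝ) {x : ℝ} (hf : IntegrableOn f (dI k ⌊x * 2^k⌋)) :
    Ek k (Ek (k+1) f) x = Ek k f x := by
  set n := ⌊x * 2^k⌋ with hn
  have hA : ∀ m : ℤ, ∫ y in dI (k+1) m, Ek (k+1) f y = ∫ y in dI (k+1) m, f y := by
    intro m
    rw [setIntegral_congr_fun (meas_dI (k+1) m) (fun y hy => Ek_const_on f hy),
      setIntegral_const, measureReal_def, vol_dI, ENNReal.toReal_ofReal (by positivity), smul_eq_mul,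
      ← mul_assoc, ← mul_pow]
    norm_num
  have hsplit := dI_split k n
  have hf1 : IntegrableOn f (dI (k+1) (2*n)) := hf.mono_set (hsplit ▸ Set.subset_union_left)
  have hf2 : IntegrableOn f (dI (k+1) (2*n+1)) := hf.mono_set (hsplit ▸ Set.subset_union_right)
  rw [Ek_eval, Ek_eval, ← hn, hsplit,
    setIntegral_union (disj_dI k n) (meas_dI _ _) (intOn_Ek_self (k+1) f (2*n)) (intOn_Ek_self (k+1) f (2*n+1)),
    setIntegral_union (disj_dI k n) (meas_dI _ _) hf1 hf2, hA, hA]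

lemma dI_floor_subset {k : ℕ} {x : ℝ} (hx : x ∈ Set.Ico (0:ℝ) 1) :
    dI k ⌊x * 2^k⌋ ⊆ Set.Ico (0:ℝ) 1 := by
  have h2 : (0:ℝ) < 2^k := by positivity
  have h0 : (0:ℝ) ≤ (⌊x * 2^k⌋ : ℝ) := by
    exact_mod_cast Int.floor_nonneg.2 (mul_nonneg hx.1 h2.le)
  have h1 : (⌊x * 2^k⌋ : ℝ) + 1 ≤ 2^k := by
    have hlt : ⌊x * 2^k⌋ < (2^k : ℤ) := Int.floor_lt.2 (by push_cast; nlinarith [hx.2])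
    have : (⌊x * 2^k⌋ : ℤ) + 1 ≤ (2^k : ℤ) := hlt
    exact_mod_cast this
  intro y hy
  rcases hy with ⟨hy1, hy2⟩
  constructor
  · have : (0:ℝ) ≤ (⌊x * 2^k⌋ : ℝ)/2^k := by positivity
    linarith
  · have : ((⌊x * 2^k⌋:ℝ)+1)/2^k ≤ 1 := by
      rw [div_le_one h2]; exact h1
    linarith

lemma Dk_zero_fun (k : ℕ) (x : ℝ) : Dk k (fun _ => (0:ℝ)) x = 0 := by
  have hE : ∀ j : ℕ, Ek j (fun _ => (0:ℝ)) x = 0 := by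
    intro j; rw [Ek_eval, integral_zero, mul_zero]
  cases k with
  | zero => exact hE 0
  | succ k => show Ek (k+1) _ x - Ek k _ x = 0; rw [hE, hE, sub_zero]

lemma Dk_idem (k : ℕ) (h : ℝ → ℝ) (hh : IntegrableOn h (Set.Ico (0:ℝ) 1)) {x : ℝ}
    (hx : x ∈ Set.Ico (0:ℝ) 1) : Dk k (Dk k h) x = Dk k h x := by
  cases k with
  | zero =>
    show Ek 0 (Ek 0 h) x = Ek 0 h x
    exact EkEk_self 0 h x
  | succ k =>
    show Ek (k+1) (fun y => Ek (k+1) h y - Ek k h y) x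
        - Ek k (fun y => Ek (k+1) h y - Ek k h y) x
      = Ek (k+1) h x - Ek k h x
    rw [Ek_sub (intOn_Ek_self (k+1) h _) (intOn_Ek_child k h _),
      Ek_sub (intOn_Ek_succ k h _) (intOn_Ek_self k h _),
      EkEk_self, EkEk_coarse, EkEk_fine k h (hh.mono_set (dI_floor_subset hx)),
      EkEk_self]
    ring

lemma ae_Ico : ∀ᵐ x ∂(volume.restrict (Set.Ioc (0:ℝ) 1)), x ∈ Set.Ico (0:ℝ) 1 := by
  have h1 : ∀ᵐ x ∂(volume.restrict (Set.Ioc (0:ℝ) 1)), x ∈ Set.Ioc (0:ℝ) 1 :=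
    ae_restrict_mem measurableSet_Ioc
  have h2 : ∀ᵐ x ∂(volume.restrict (Set.Ioc (0:ℝ) 1)), x ≠ 1 := by
    rw [Filter.eventually_iff, mem_ae_iff]
    apply measure_mono_null (t := {(1:ℝ)})
    · intro x hx
      simp only [Set.mem_compl_iff, Set.mem_setOf_eq, not_not] at hx
      simpa using hx
    · exact le_antisymm ((Measure.restrict_apply_le _ _).trans (by simp)) zero_le
  filter_upwards [h1, h2] with x hx hne
  exact ⟨hx.1.le, lt_of_le_of_ne hx.2 hne⟩

lemma Ek_bound (k : ℕ) (f : ℝ → ℝ) :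
    ∃ C : ℝ, 0 ≤ C ∧ ∀ x ∈ Set.Ico (0:ℝ) 1, |Ek k f x| ≤ C := by
  refine ⟨∑ n ∈ Finset.range (2^k), |2^k * ∫ y in dI k (n:ℤ), f y|,
    Finset.sum_nonneg fun _ _ => abs_nonneg _, ?_⟩
  intro x hx
  have h2 : (0:ℝ) < 2^k := by positivity
  have h0 : 0 ≤ ⌊x * 2^k⌋ := Int.floor_nonneg.2 (mul_nonneg hx.1 h2.le)
  have hlt : ⌊x * 2^k⌋ < (2^k : ℤ) := Int.floor_lt.2 (by push_cast; nlinarith [hx.2])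
  have hmem : ⌊x * 2^k⌋.toNat ∈ Finset.range (2^k) := by
    rw [Finset.mem_range]
    have : (2:ℤ)^k = ((2^k : ℕ) : ℤ) := by push_cast; ring
    rw [this] at hlt
    omega
  have hcast : ((⌊x * 2^k⌋.toNat : ℤ)) = ⌊x * 2^k⌋ := Int.toNat_of_nonneg h0
  calc |Ek k f x| = |2^k * ∫ y in dI k ((⌊x * 2^k⌋.toNat : ℤ)), f y| := by
        rw [Ek_eval, hcast]
    _ ≤ _ := Finset.single_le_sum (f := fun n : ℕ => |2^k * ∫ y in dI k (n:ℤ), f y|)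
        (fun _ _ => abs_nonneg _) hmem

lemma intOn_Ek_mul {k : ℕ} (f : ℝ → ℝ) {h : ℝ → ℝ}
    (hh : IntegrableOn h (Set.Ioc (0:ℝ) 1)) :
    IntegrableOn (fun x => Ek k f x * h x) (Set.Ioc (0:ℝ) 1) := by
  obtain ⟨C, hC0, hC⟩ := Ek_bound k f
  apply Integrable.mono' (hh.abs.const_mul C)
    (((Ek_measurable k f).aestronglyMeasurable.restrict).mul hh.aestronglyMeasurable)
  filter_upwards [ae_Ico] with x hx
  show ‖Ek k f x * h x‖ ≤ C * |h x|
  rw [Real.norm_eq_abs, abs_mul]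
  exact mul_le_mul (hC x hx) le_rfl (abs_nonneg _) hC0

lemma intOn_Ek_Ioc (k : ℕ) (f : ℝ → ℝ) : IntegrableOn (Ek k f) (Set.Ioc (0:ℝ) 1) := by
  have := intOn_Ek_mul (k := k) f (h := fun _ => (1:ℝ))
    (integrableOn_const (by simp))
  simpa using this

lemma partition (k : ℕ) (F : ℝ → ℝ) (hF : IntegrableOn F (Set.Ioc (0:ℝ) 1)) :
    ∫ x in Set.Ioc (0:ℝ) 1, F x
      = ∑ n ∈ Finset.range (2^k), ∫ x in Set.Ioc ((n:ℝ)/2^k) (((n:ℝ)+1)/2^k), F x := by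
  set a : ℕ → ℝ := fun n => (n:ℝ)/2^k with ha
  have h2 : (0:ℝ) < 2^k := by positivity
  have hmono : ∀ n : ℕ, a n ≤ a (n+1) := by
    intro n
    apply div_le_div_of_nonneg_right ?_ h2.le
    push_cast; linarith
  have hsub : ∀ i : ℕ, i < 2^k → Set.Ioc (a i) (a (i+1)) ⊆ Set.Ioc (0:ℝ) 1 := by
    intro i hi
    apply Set.Ioc_subset_Ioc
    · positivity
    · rw [ha]
      push_cast
      rw [div_le_one h2]
      have : (i:ℝ) + 1 ≤ (2:ℝ)^k := by exact_mod_cast Nat.succ_le_of_lt hi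
      linarith
  have hint : ∀ i < 2^k, IntervalIntegrable F volume (a i) (a (i+1)) := by
    intro i hi
    rw [intervalIntegrable_iff, Set.uIoc_of_le (hmono i)]
    exact hF.mono_set (hsub i hi)
  have := intervalIntegral.sum_integral_adjacent_intervals hint
  have ha0 : a 0 = 0 := by simp [ha]
  have han : a (2^k) = 1 := by
    rw [ha]; push_cast; rw [div_self h2.ne']
  rw [ha0, han, intervalIntegral.integral_of_le zero_le_one] at this
  rw [← this]
  apply Finset.sum_congr rfl
  intro n hn
  rw [intervalIntegral.integral_of_le (hmono n)]
  congr 1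
  rw [ha]
  push_cast
  ring_nf

lemma sa (k : ℕ) (f : ℝ → ℝ) {h : ℝ → ℝ} (hh : IntegrableOn h (Set.Ioc (0:ℝ) 1)) :
    ∫ x in Set.Ioc (0:ℝ) 1, Ek k f x * h x
      = ∑ n ∈ Finset.range (2^k),
          (2^k * ∫ y in dI k (n:ℤ), f y) * (∫ y in dI k (n:ℤ), h y) := by
  rw [partition k _ (intOn_Ek_mul f hh)]
  apply Finset.sum_congr rfl
  intro n hn
  have hend : dI k (n:ℤ) = Set.Ico ((n:ℝ)/2^k) (((n:ℝ)+1)/2^k) := by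
    rw [dI]; push_cast; rfl
  have hsubset : Set.Ioo ((n:ℝ)/2^k) (((n:ℝ)+1)/2^k) ⊆ dI k (n:ℤ) := by
    rw [hend]; exact Set.Ioo_subset_Ico_self
  rw [integral_Ioc_eq_integral_Ioo,
    setIntegral_congr_fun measurableSet_Ioo
      (fun y hy => by rw [Ek_const_on f (hsubset hy)]),
    MeasureTheory.integral_const_mul, hend, integral_Ico_eq_integral_Ioo,
    integral_Ico_eq_integral_Ioo]

lemma Ek_adjoint (k : ℕ) {f h : ℝ → ℝ} (hf : IntegrableOn f (Set.Ioc (0:ℝ) 1))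
    (hh : IntegrableOn h (Set.Ioc (0:ℝ) 1)) :
    ∫ x in Set.Ioc (0:ℝ) 1, Ek k f x * h x
      = ∫ x in Set.Ioc (0:ℝ) 1, f x * Ek k h x := by
  have h1 : ∀ x, f x * Ek k h x = Ek k h x * f x := fun x => mul_comm _ _
  simp_rw [h1]
  rw [sa k f hh, sa k h hf]
  apply Finset.sum_congr rfl
  intro n _
  ring

lemma mul_swap_intOn {j : ℕ} {f h : ℝ → ℝ} (hf : IntegrableOn f (Set.Ioc (0:ℝ) 1)) :
    IntegrableOn (fun x => f x * Ek j h x) (Set.Ioc (0:ℝ) 1) :=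
  (intOn_Ek_mul h hf).congr_fun (fun x _ => mul_comm _ _) measurableSet_Ioc

lemma Dk_adjoint (k : ℕ) {f h : ℝ → ℝ} (hf : IntegrableOn f (Set.Ioc (0:ℝ) 1))
    (hh : IntegrableOn h (Set.Ioc (0:ℝ) 1)) :
    ∫ x in Set.Ioc (0:ℝ) 1, Dk k f x * h x
      = ∫ x in Set.Ioc (0:ℝ) 1, f x * Dk k h x := by
  cases k with
  | zero => exact Ek_adjoint 0 hf hh
  | succ k =>
    show ∫ x in Set.Ioc (0:ℝ) 1, (Ek (k+1) f x - Ek k f x) * h x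
        = ∫ x in Set.Ioc (0:ℝ) 1, f x * (Ek (k+1) h x - Ek k h x)
    simp_rw [sub_mul, mul_sub]
    rw [integral_sub (intOn_Ek_mul f hh) (intOn_Ek_mul f hh),
      integral_sub (mul_swap_intOn hf) (mul_swap_intOn hf),
      Ek_adjoint _ hf hh, Ek_adjoint _ hf hh]

lemma intOn_Dk_Ioc (k : ℕ) (f : ℝ → ℝ) : IntegrableOn (Dk k f) (Set.Ioc (0:ℝ) 1) := by
  cases k with
  | zero => exact intOn_Ek_Ioc 0 f
  | succ k =>
    have hD : Dk (k+1) f = fun x => Ek (k+1) f x - Ek k f x := rfl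
    rw [hD]
    exact Integrable.sub (intOn_Ek_Ioc (k+1) f) (intOn_Ek_Ioc k f)

lemma intOn_Dk_mul (k : ℕ) (f : ℝ → ℝ) {h : ℝ → ℝ}
    (hh : IntegrableOn h (Set.Ioc (0:ℝ) 1)) :
    IntegrableOn (fun x => Dk k f x * h x) (Set.Ioc (0:ℝ) 1) := by
  cases k with
  | zero => exact intOn_Ek_mul f hh
  | succ k =>
    have h1 : IntegrableOn (fun x => Ek (k+1) f x * h x - Ek k f x * h x)
        (Set.Ioc (0:ℝ) 1) :=
      Integrable.sub (intOn_Ek_mul f hh) (intOn_Ek_mul f hh)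
    apply h1.congr_fun ?_ measurableSet_Ioc
    intro x _
    show Ek (k+1) f x * h x - Ek k f x * h x = (Ek (k+1) f x - Ek k f x) * h x
    ring

lemma intOn_mul_Dk (k : ℕ) {f : ℝ → ℝ} (h : ℝ → ℝ)
    (hf : IntegrableOn f (Set.Ioc (0:ℝ) 1)) :
    IntegrableOn (fun x => f x * Dk k h x) (Set.Ioc (0:ℝ) 1) := by
  cases k with
  | zero => exact mul_swap_intOn hf
  | succ k =>
    have h1 : IntegrableOn (fun x => f x * Ek (k+1) h x - f x * Ek k h x)
        (Set.Ioc (0:ℝ) 1) :=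
      Integrable.sub (mul_swap_intOn hf) (mul_swap_intOn hf)
    apply h1.congr_fun ?_ measurableSet_Ioc
    intro x _
    show f x * Ek (k+1) h x - f x * Ek k h x = f x * (Ek (k+1) h x - Ek k h x)
    ring

lemma Dk_measurable (k : ℕ) (f : ℝ → ℝ) : Measurable (Dk k f) := by
  cases k with
  | zero => exact Ek_measurable 0 f
  | succ k =>
    show Measurable (fun x => Ek (k+1) f x - Ek k f x)
    exact (Ek_measurable (k+1) f).sub (Ek_measurable k f)

lemma Ek_abs_le (j : ℕ) {h : ℝ → ℝ} (hint : Integrable h volume)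
    (hb : ∀ y, ‖h y‖ ≤ 1) (x : ℝ) : |Ek j h x| ≤ 1 := by
  have h2 : (0:ℝ) < 2^j := by positivity
  have hvol : volume (dI j ⌊x * 2^j⌋) < ⊤ := by
    rw [vol_dI]; exact ENNReal.ofReal_lt_top
  have := norm_setIntegral_le_of_norm_le_const (f := h) hvol
    (fun y _ => hb y)
  rw [Ek_eval, abs_mul, abs_of_pos h2]
  calc (2:ℝ)^j * |∫ y in dI j ⌊x * 2^j⌋, h y|
      ≤ 2^j * (1 * (volume (dI j ⌊x * 2^j⌋)).toReal) := by
        exact mul_le_mul_of_nonneg_left this h2.le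
    _ = 1 := by
        rw [vol_dI, ENNReal.toReal_ofReal (by positivity), one_mul, ← mul_pow]
        norm_num

lemma Dk_abs_le (k : ℕ) {h : ℝ → ℝ} (hint : Integrable h volume)
    (hb : ∀ y, ‖h y‖ ≤ 1) (x : ℝ) : |Dk k h x| ≤ 2 := by
  cases k with
  | zero =>
    have := Ek_abs_le 0 hint hb x
    show |Ek 0 h x| ≤ 2
    linarith
  | succ k =>
    show |Ek (k+1) h x - Ek k h x| ≤ 2
    have h1 := Ek_abs_le (k+1) hint hb x
    have h2 := Ek_abs_le k hint hb x
    calc |Ek (k+1) h x - Ek k h x| ≤ |Ek (k+1) h x| + |Ek k h x| := abs_sub _ _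
      _ ≤ 2 := by linarith

lemma Dk_ann {k : ℕ} {h : ℝ → ℝ} (hh : IntegrableOn h (Set.Ico (0:ℝ) 1)) {x : ℝ}
    (hx : x ∈ Set.Ico (0:ℝ) 1) : Dk k (fun y => h y - Dk k h y) x = 0 := by
  have main : Dk k (fun y => h y - Dk k h y) x = Dk k h x - Dk k (Dk k h) x := by
    cases k with
    | zero =>
      exact Ek_sub (hh.mono_set (dI_floor_subset hx)) (intOn_Ek_self 0 h _)
    | succ k =>
      have hD : Dk (k+1) h = fun y => Ek (k+1) h y - Ek k h y := rfl
      have hD1 : IntegrableOn (Dk (k+1) h) (dI (k+1) ⌊x * 2^(k+1)⌋) := by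
        rw [hD]; exact (intOn_Ek_self (k+1) h _).sub (intOn_Ek_child k h _)
      have hD2 : IntegrableOn (Dk (k+1) h) (dI k ⌊x * 2^k⌋) := by
        rw [hD]; exact (intOn_Ek_succ k h _).sub (intOn_Ek_self k h _)
      show Ek (k+1) (fun y => h y - Dk (k+1) h y) x - Ek k (fun y => h y - Dk (k+1) h y) x
        = (Ek (k+1) h x - Ek k h x) - (Ek (k+1) (Dk (k+1) h) x - Ek k (Dk (k+1) h) x)
      rw [Ek_sub (hh.mono_set (dI_floor_subset hx)) hD1,
        Ek_sub (hh.mono_set (dI_floor_subset hx)) hD2]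
      ring
  rw [main, Dk_idem k h hh hx, sub_self]

lemma two_rpow_ge_one {s : ℝ} (hs : 0 ≤ s) : (1:ℝ) ≤ (2:ℝ) ^ s := by
  have := Real.rpow_le_rpow_of_exponent_le (x := 2) one_le_two hs
  rwa [Real.rpow_zero] at this

lemma Bfun_nonneg {σ t : ℝ} (ht : 0 ≤ t) : 0 ≤ Bfun σ t := by
  apply mul_nonneg ht
  apply Real.rpow_nonneg
  apply Real.log_nonneg
  have := Real.exp_one_gt_d9
  linarith

lemma Bfun_le_one {σ t : ℝ} (hσ : 0 ≤ σ) (h0 : 0 ≤ t) (ht1 : t ≤ 1)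
    (h1 : t * 2^σ ≤ 1) : Bfun σ t ≤ 1 := by
  have hlog : Real.log (Real.exp 1 + t) ≤ 2 := by
    rw [Real.log_le_iff_le_exp (by positivity)]
    have h2 : Real.exp 2 = Real.exp 1 * Real.exp 1 := by
      rw [← Real.exp_add]; norm_num
    have := Real.exp_one_gt_d9
    nlinarith
  have hlog0 : 0 ≤ Real.log (Real.exp 1 + t) := by
    apply Real.log_nonneg
    have := Real.exp_one_gt_d9
    linarith
  have hr : (Real.log (Real.exp 1 + t)) ^ σ ≤ (2:ℝ) ^ σ :=
    Real.rpow_le_rpow hlog0 hlog hσ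
  calc Bfun σ t ≤ t * 2^σ := mul_le_mul_of_nonneg_left hr h0
    _ ≤ 1 := h1

/-- Let `σ ≥ 0` and let `Y` be the set of sequences `{ψ_k}` in
`L log^{σ/2}L([0,1]; ℓ²)` with `D_k ψ_k = 0` for all `k`.  If `{g_k}` (in the dual space,
in particular integrable) annihilates `Y`, i.e. `∫ Σ_k g_k ψ_k = 0` for all `{ψ_k} ∈ Y`,
then `D_k g_k = g_k` a.e. for every `k`. -/
theorem annihilator_fixed_by_Dk (σ : ℝ) (hσ : 0 ≤ σ) (g : ℕ → ℝ → ℝ)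
    (hg : ∀ k, IntegrableOn (g k) (Set.Ioc (0:ℝ) 1))
    (hann : ∀ ψ : ℕ → ℝ → ℝ,
      (∀ k, IntegrableOn (ψ k) (Set.Ioc (0:ℝ) 1)) →
      (∃ lam : ℝ, 0 < lam ∧
        IntegrableOn (fun x => Bfun (σ/2) (Real.sqrt (∑' k, (ψ k x)^2) / lam))
          (Set.Ioc (0:ℝ) 1) ∧
        (∫ x in Set.Ioc (0:ℝ) 1,
          Bfun (σ/2) (Real.sqrt (∑' k, (ψ k x)^2) / lam)) ≤ 1) →
      (∀ k, ∀ᵐ x ∂(volume.restrict (Set.Ioc (0:ℝ) 1)), Dk k (ψ k) x = 0) →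
      IntegrableOn (fun x => ∑' k, g k x * ψ k x) (Set.Ioc (0:ℝ) 1) →
      (∫ x in Set.Ioc (0:ℝ) 1, ∑' k, g k x * ψ k x) = 0) :
    ∀ k, ∀ᵐ x ∂(volume.restrict (Set.Ioc (0:ℝ) 1)), Dk k (g k) x = g k x := by
  intro k
  have hw : Integrable (fun x => Dk k (g k) x - g k x)
      (volume.restrict (Set.Ioc (0:ℝ) 1)) :=
    Integrable.sub (intOn_Dk_Ioc k (g k)) (hg k)
  have key : ∀ s, MeasurableSet s → (volume.restrict (Set.Ioc (0:ℝ) 1)) s < ⊤ →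
      ∫ x in s, (Dk k (g k) x - g k x) ∂(volume.restrict (Set.Ioc (0:ℝ) 1)) = 0 := by
    intro s hs _
    rw [Measure.restrict_restrict hs]
    set t := s ∩ Set.Ioc (0:ℝ) 1 with ht_def
    have ht : MeasurableSet t := hs.inter measurableSet_Ioc
    have htsub : t ⊆ Set.Ioc (0:ℝ) 1 := Set.inter_subset_right
    set h : ℝ → ℝ := t.indicator (fun _ => 1) with hdef
    have hmeas : Measurable h := measurable_const.indicator ht
    have hb : ∀ y, ‖h y‖ ≤ 1 := by
      intro y
      rw [hdef, Real.norm_eq_abs]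
      by_cases hy : y ∈ t <;> simp [hy]
    have hglob : Integrable h volume := by
      rw [hdef, integrable_indicator_iff ht]
      exact integrableOn_const (lt_of_le_of_lt (measure_mono htsub) (by simp)).ne
    have hhInt : IntegrableOn h (Set.Ioc (0:ℝ) 1) := hglob.integrableOn
    have hhIco : IntegrableOn h (Set.Ico (0:ℝ) 1) := hglob.integrableOn
    set v : ℝ → ℝ := fun x => h x - Dk k h x with hv
    have hvInt : IntegrableOn v (Set.Ioc (0:ℝ) 1) :=
      Integrable.sub hhInt (intOn_Dk_Ioc k h)
    have hvb : ∀ x, |v x| ≤ 3 := by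
      intro x
      have h1 := Dk_abs_le k hglob hb x
      have h2 := hb x
      rw [Real.norm_eq_abs] at h2
      calc |v x| = |h x - Dk k h x| := rfl
        _ ≤ |h x| + |Dk k h x| := abs_sub _ _
        _ ≤ 3 := by linarith
    have hvmeas : Measurable v := hmeas.sub (Dk_measurable k h)
    set ψ : ℕ → ℝ → ℝ := fun j x => if j = k then v x else 0 with hψ
    have hsq : ∀ x, Real.sqrt (∑' j, (ψ j x)^2) = |v x| := by
      intro x
      have : ∑' j, (ψ j x)^2 = (v x)^2 := by
        rw [tsum_eq_single k]
        · simp [hψ]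
        · intro j hj; simp [hψ, hj]
      rw [this, Real.sqrt_sq_eq_abs]
    have hψint : ∀ j, IntegrableOn (ψ j) (Set.Ioc (0:ℝ) 1) := by
      intro j
      by_cases hj : j = k
      · subst hj
        have : ψ j = v := by funext y; simp [hψ]
        rw [this]; exact hvInt
      · have : ψ j = fun _ => 0 := by funext y; simp [hψ, hj]
        rw [this]; exact integrableOn_const (by simp)
    -- the Orlicz bound
    have h2s : (1:ℝ) ≤ (2:ℝ)^(σ/2) := two_rpow_ge_one (by linarith)
    have h2sp : (0:ℝ) < (2:ℝ)^(σ/2) := by linarith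
    set lam : ℝ := 3 * (2:ℝ)^(σ/2) with hlam_def
    have hlam : 0 < lam := by positivity
    have hBle : ∀ x, Bfun (σ/2) (Real.sqrt (∑' j, (ψ j x)^2) / lam) ≤ 1 := by
      intro x
      rw [hsq]
      have h3 : |v x| / lam ≤ 1 := by
        rw [div_le_one hlam]
        nlinarith [hvb x]
      have h4 : (|v x| / lam) * 2^(σ/2) ≤ 1 := by
        rw [div_mul_eq_mul_div, div_le_one hlam, hlam_def]
        nlinarith [hvb x]
      exact Bfun_le_one (by linarith) (by positivity) h3 h4
    have hBnn : ∀ x, 0 ≤ Bfun (σ/2) (Real.sqrt (∑' j, (ψ j x)^2) / lam) := by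
      intro x
      exact Bfun_nonneg (by positivity)
    have hBmeas : Measurable
        (fun x => Bfun (σ/2) (Real.sqrt (∑' j, (ψ j x)^2) / lam)) := by
      have hfun : (fun x => Bfun (σ/2) (Real.sqrt (∑' j, (ψ j x)^2) / lam))
          = fun x => (|v x| / lam) * (Real.log (Real.exp 1 + |v x| / lam))^(σ/2) := by
        funext x; rw [hsq]; rfl
      rw [hfun]
      have hq : Measurable (fun x => |v x| / lam) := hvmeas.abs.div_const lam
      exact hq.mul ((Real.continuous_rpow_const (by linarith)).measurable.comp
        (Real.measurable_log.comp (measurable_const.add hq)))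
    have hBint : IntegrableOn
        (fun x => Bfun (σ/2) (Real.sqrt (∑' j, (ψ j x)^2) / lam))
        (Set.Ioc (0:ℝ) 1) := by
      apply Integrable.mono' (g := fun _ => (1:ℝ))
        (integrableOn_const (by simp))
        hBmeas.aestronglyMeasurable.restrict
      apply Filter.Eventually.of_forall
      intro x
      rw [Real.norm_eq_abs, abs_of_nonneg (hBnn x)]
      exact hBle x
    have hBint1 : (∫ x in Set.Ioc (0:ℝ) 1,
        Bfun (σ/2) (Real.sqrt (∑' j, (ψ j x)^2) / lam)) ≤ 1 := by
      calc (∫ x in Set.Ioc (0:ℝ) 1, Bfun (σ/2) (Real.sqrt (∑' j, (ψ j x)^2) / lam))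
          ≤ ∫ _x in Set.Ioc (0:ℝ) 1, (1:ℝ) := by
            apply setIntegral_mono_on hBint
              (integrableOn_const (by simp)) measurableSet_Ioc
            intro x _
            exact hBle x
        _ = 1 := by simp
    -- Dk kills ψ
    have hDψ : ∀ j, ∀ᵐ x ∂(volume.restrict (Set.Ioc (0:ℝ) 1)), Dk j (ψ j) x = 0 := by
      intro j
      by_cases hj : j = k
      · subst hj
        have hψj : ψ j = fun y => h y - Dk j h y := by funext y; simp [hψ, hv]
        rw [hψj]
        filter_upwards [ae_Ico] with x hx
        exact Dk_ann hhIco hx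
      · have : ψ j = fun _ => 0 := by funext y; simp [hψ, hj]
        rw [this]
        exact Filter.Eventually.of_forall fun x => Dk_zero_fun j x
    -- the pairing integrand
    have hident : ∀ x, ∑' j, g j x * ψ j x = g k x * v x := by
      intro x
      rw [tsum_eq_single k]
      · simp [hψ]
      · intro j hj; simp [hψ, hj]
    have hgh : IntegrableOn (fun x => g k x * h x) (Set.Ioc (0:ℝ) 1) := by
      apply Integrable.mono' ((hg k).abs)
        ((hg k).aestronglyMeasurable.mul hmeas.aestronglyMeasurable.restrict)
      apply Filter.Eventually.of_forall
      intro x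
      show ‖g k x * h x‖ ≤ |g k x|
      rw [Real.norm_eq_abs, abs_mul]
      have h2 := hb x
      rw [Real.norm_eq_abs] at h2
      nlinarith [abs_nonneg (g k x), abs_nonneg (h x)]
    have hgv : IntegrableOn (fun x => g k x * v x) (Set.Ioc (0:ℝ) 1) := by
      have h1 : IntegrableOn (fun x => g k x * h x - g k x * Dk k h x)
          (Set.Ioc (0:ℝ) 1) := Integrable.sub hgh (intOn_mul_Dk k h (hg k))
      apply h1.congr_fun ?_ measurableSet_Ioc
      intro x _
      show g k x * h x - g k x * Dk k h x = g k x * v x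
      rw [hv]; ring
    have hgψ : IntegrableOn (fun x => ∑' j, g j x * ψ j x) (Set.Ioc (0:ℝ) 1) :=
      hgv.congr_fun (fun x _ => (hident x).symm) measurableSet_Ioc
    have h0 := hann ψ hψint ⟨lam, hlam, hBint, hBint1⟩ hDψ hgψ
    have hgv0 : ∫ x in Set.Ioc (0:ℝ) 1, g k x * v x = 0 := by
      calc ∫ x in Set.Ioc (0:ℝ) 1, g k x * v x
          = ∫ x in Set.Ioc (0:ℝ) 1, ∑' j, g j x * ψ j x :=
            setIntegral_congr_fun measurableSet_Ioc (fun x _ => (hident x).symm)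
        _ = 0 := h0
    -- rewrite the target integral
    have step1 : ∫ x in t, (Dk k (g k) x - g k x)
        = ∫ x in Set.Ioc (0:ℝ) 1, (Dk k (g k) x - g k x) * h x := by
      have heq : ∀ x, (Dk k (g k) x - g k x) * h x
          = t.indicator (fun y => Dk k (g k) y - g k y) x := by
        intro x
        rw [hdef]
        by_cases hx : x ∈ t <;> simp [hx]
      rw [setIntegral_congr_fun measurableSet_Ioc (fun x _ => heq x),
        setIntegral_indicator ht, Set.inter_eq_self_of_subset_right htsub]
    have step2 : ∫ x in Set.Ioc (0:ℝ) 1, (Dk k (g k) x - g k x) * h x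
        = (∫ x in Set.Ioc (0:ℝ) 1, g k x * Dk k h x)
          - ∫ x in Set.Ioc (0:ℝ) 1, g k x * h x := by
      have hsplit : ∫ x in Set.Ioc (0:ℝ) 1, (Dk k (g k) x - g k x) * h x
          = (∫ x in Set.Ioc (0:ℝ) 1, Dk k (g k) x * h x)
            - ∫ x in Set.Ioc (0:ℝ) 1, g k x * h x := by
        rw [← integral_sub (intOn_Dk_mul k (g k) hhInt) hgh]
        apply setIntegral_congr_fun measurableSet_Ioc
        intro x _
        ring
      rw [hsplit, Dk_adjoint k (hg k) hhInt]
    have step3 : (∫ x in Set.Ioc (0:ℝ) 1, g k x * h x)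
        - (∫ x in Set.Ioc (0:ℝ) 1, g k x * Dk k h x) = 0 := by
      calc (∫ x in Set.Ioc (0:ℝ) 1, g k x * h x)
            - (∫ x in Set.Ioc (0:ℝ) 1, g k x * Dk k h x)
          = ∫ x in Set.Ioc (0:ℝ) 1, (g k x * h x - g k x * Dk k h x) :=
            (integral_sub hgh (intOn_mul_Dk k h (hg k))).symm
        _ = ∫ x in Set.Ioc (0:ℝ) 1, g k x * v x := by
            apply setIntegral_congr_fun measurableSet_Ioc
            intro x _
            show g k x * h x - g k x * Dk k h x = g k x * v x
            rw [hv]; ring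
        _ = 0 := hgv0
    rw [step1, step2]
    linarith
  have := hw.ae_eq_zero_of_forall_setIntegral_eq_zero key
  filter_upwards [this] with x hx
  have : Dk k (g k) x - g k x = 0 := hx
  linarith
end
end

section
/- (Improved pointwise decay under cancellation) Let J be a finite interval with center c_J, f supported in J with ∫_J f = 0, and L ∈ Λ_1 with |L||J| < 1. Let Δ_L have symbol φ_L(ξ) = e^{2πic_Lξ}|L|φ(|L|ξ) with φ Schwartz (c_L the center of L). Then for all x ∈ ℝ: |Δ_L f(x)| ≲_M |L|²|J|² (1 + |L||x − c_J|)^{−M} ⟨|f|⟩_{1,J} for any large positive integer M. -/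
open MeasureTheory Real Set

noncomputable section

/-- Decay bound for a Schwartz function. -/
lemma schwartz_decay_aux (M : ℕ) (φ : SchwartzMap ℝ ℂ) :
    ∃ A ≥ 0, ∀ u : ℝ, (1+|u|)^M * ‖φ u‖ ≤ A := by
  refine ⟨2^M * ((Finset.Iic (M,0)).sup (schwartzSeminormFamily ℝ ℝ ℂ)) φ, by positivity, ?_⟩
  intro u
  have := SchwartzMap.one_add_le_sup_seminorm_apply (𝕜 := ℝ) (m := (M,0)) le_rfl le_rfl φ u
  simp [norm_iteratedFDeriv_zero, Real.norm_eq_abs] at this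
  exact this

/-- Derivative of the modulated dilated kernel. -/
lemma kernel_hasDerivAt (w : ℂ) (L : ℝ) (φ : SchwartzMap ℝ ℂ) (t : ℝ) :
    HasDerivAt (fun t : ℝ => Complex.exp (w * t) * (L:ℂ) * φ (L * t))
      ((w * Complex.exp (w*t)) * ((L:ℂ) * φ (L*t))
        + Complex.exp (w*t) * ((L:ℂ) * (L • deriv (φ : ℝ → ℂ) (L*t)))) t := by
  have h1 : HasDerivAt (fun t:ℝ => Complex.exp (w*t)) (w * Complex.exp (w*t)) t := by
    have hin : HasDerivAt (fun t:ℝ => w * (t:ℂ)) w t := by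
      simpa using (Complex.ofRealCLM.hasDerivAt (x := t)).const_mul w
    simpa [mul_comm] using hin.cexp
  have h2 : HasDerivAt (fun t:ℝ => φ (L * t)) (L • deriv (φ : ℝ → ℂ) (L*t)) t := by
    have hin : HasDerivAt (fun t:ℝ => L * t) L t := by
      simpa using (hasDerivAt_id t).const_mul L
    exact (φ.differentiable.differentiableAt.hasDerivAt).scomp t hin
  have h3 : HasDerivAt (fun t:ℝ => (L:ℂ) * φ (L*t)) ((L:ℂ) * (L • deriv (φ : ℝ → ℂ) (L*t))) t :=
    h2.const_mul _
  have h4 : HasDerivAt (fun t : ℝ => Complex.exp (w * t) * ((L:ℂ) * φ (L * t)))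
      ((w * Complex.exp (w*t)) * ((L:ℂ) * φ (L*t))
        + Complex.exp (w*t) * ((L:ℂ) * (L • deriv (φ : ℝ → ℂ) (L*t)))) t := h1.mul h3
  simpa [mul_assoc] using h4

lemma exp_I_mul_real_norm (r : ℝ) : ‖Complex.exp (Complex.I * (r:ℂ))‖ = 1 := by
  rw [Complex.norm_exp]
  simp

/-- Norm bound for the derivative of the kernel. -/
lemma kernel_deriv_norm_le (φ : SchwartzMap ℝ ℂ) (r L : ℝ) (hL : 0 < L) (t : ℝ) :
    ‖(Complex.I * ((r:ℝ):ℂ) * Complex.exp (Complex.I * ((r:ℝ):ℂ) * t)) * ((L:ℂ) * φ (L*t))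
      + Complex.exp (Complex.I * ((r:ℝ):ℂ) * t) * ((L:ℂ) * (L • deriv (φ : ℝ → ℂ) (L*t)))‖
      ≤ |r| * (L * ‖φ (L*t)‖) + L * (L * ‖deriv (φ : ℝ → ℂ) (L*t)‖) := by
  have he : ‖Complex.exp (Complex.I * ((r:ℝ):ℂ) * t)‖ = 1 := by
    rw [show Complex.I * ((r:ℝ):ℂ) * (t:ℂ) = Complex.I * ((r*t : ℝ):ℂ) by push_cast; ring]
    exact exp_I_mul_real_norm (r*t)
  calc ‖(Complex.I * ((r:ℝ):ℂ) * Complex.exp (Complex.I * ((r:ℝ):ℂ) * t)) * ((L:ℂ) * φ (L*t))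
      + Complex.exp (Complex.I * ((r:ℝ):ℂ) * t) * ((L:ℂ) * (L • deriv (φ : ℝ → ℂ) (L*t)))‖
      ≤ ‖(Complex.I * ((r:ℝ):ℂ) * Complex.exp (Complex.I * ((r:ℝ):ℂ) * t)) * ((L:ℂ) * φ (L*t))‖
      + ‖Complex.exp (Complex.I * ((r:ℝ):ℂ) * t) * ((L:ℂ) * (L • deriv (φ : ℝ → ℂ) (L*t)))‖ :=
        norm_add_le _ _
    _ = |r| * (L * ‖φ (L*t)‖) + L * (L * ‖deriv (φ : ℝ → ℂ) (L*t)‖) := by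
        simp only [norm_mul, norm_smul, he, Complex.norm_I, Complex.norm_real,
          Real.norm_eq_abs, abs_of_pos hL, one_mul, mul_one]

set_option maxHeartbeats 1000000 in
/-- Improved pointwise decay under cancellation.  Let `J` be a finite
interval with center `c_J` and length `h`, `f` supported in `J` with `∫_J f = 0`, and
`L = ±[2^k, 2^{k+1}) ∈ Λ₁` with `|L||J| < 1`.  Let `Δ_L` be the convolution operator with
kernel `t ↦ e^{2πi c_L t}|L| φ(|L|t)`, `φ` Schwartz, `c_L` the center of `L`.  Then for all
`x`: `|Δ_L f(x)| ≲_M |L|²|J|² (1 + |L||x − c_J|)^{−M} ⟨|f|⟩_{1,J}` for any `M ∈ ℕ`. -/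
theorem pointwise_decay_with_cancellation (φ : SchwartzMap ℝ ℂ) (M : ℕ) :
    ∃ C > 0, ∀ (cJ h : ℝ), 0 < h →
      ∀ f : ℝ → ℂ, Integrable f →
        Function.support f ⊆ Set.Icc (cJ - h/2) (cJ + h/2) →
        (∫ y, f y) = 0 →
      ∀ (a b : ℝ) (k : ℤ),
        ((a = (2:ℝ)^k ∧ b = (2:ℝ)^(k+1)) ∨ (a = -(2:ℝ)^(k+1) ∧ b = -(2:ℝ)^k)) →
        (b - a) * h < 1 →
      ∀ x : ℝ,
        ‖∫ y : ℝ, (Complex.exp (Complex.I * ((2 * π * ((a+b)/2) * (x - y) : ℝ) : ℂ)) *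
            ((b - a : ℝ) : ℂ) * φ ((b - a) * (x - y))) * f y‖ ≤
          C * (b-a)^2 * h^2 * (1 + (b-a) * |x - cJ|) ^ (-(M:ℝ)) *
            (h⁻¹ * ∫ y in Set.Icc (cJ - h/2) (cJ + h/2), ‖f y‖) := by
  obtain ⟨A, hA0, hA⟩ := schwartz_decay_aux M φ
  obtain ⟨B, hB0, hB⟩ := schwartz_decay_aux M (SchwartzMap.derivCLM ℝ ℂ φ)
  have hB' : ∀ u : ℝ, (1+|u|)^M * ‖deriv (φ : ℝ → ℂ) u‖ ≤ B := by
    intro u; simpa [SchwartzMap.derivCLM_apply] using hB u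
  set D : ℝ := 3*π*A + B + 1 with hD
  have hDpos : 0 < D := by positivity
  refine ⟨D * (3/2)^M, by positivity, ?_⟩
  intro cJ h hh f hf hsupp hint0 a b k hab hLh x
  -- basic arithmetic on the interval L
  have h2k : (0:ℝ) < 2^k := by positivity
  have h2 : (2:ℝ)^(k+1) = 2^k * 2 := zpow_add_one₀ two_ne_zero k
  have hba : b - a = 2^k ∧ |a+b| = 3 * 2^k := by
    rcases hab with ⟨ha, hb⟩|⟨ha, hb⟩ <;> rw [ha, hb, h2] <;> constructor
    · ring
    · rw [abs_of_pos (by nlinarith)]; ring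
    · ring
    · rw [abs_of_neg (by nlinarith)]; ring
  have hl : 0 < b - a := hba.1 ▸ h2k
  set L : ℝ := b - a with hLdef
  set r : ℝ := 2 * π * ((a+b)/2) with hr
  have hrabs : |r| ≤ 3*π*L := by
    have h2' : r = π*(a+b) := by rw [hr]; ring
    rw [h2', abs_mul, abs_of_pos pi_pos, hba.2]
    nlinarith [hba.1, pi_pos]
  set w : ℂ := Complex.I * ((r : ℝ) : ℂ) with hw
  set g : ℝ → ℂ := fun t => Complex.exp (w * t) * (L:ℂ) * φ (L * t) with hg
  -- decay quantities
  set Q : ℝ := 1 + L * |x - cJ| with hQ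
  have hQpos : 0 < Q := by positivity
  set P : ℝ := Q ^ (-(M:ℝ)) with hP
  have hPeq : P = (Q^M)⁻¹ := by
    rw [hP, rpow_neg hQpos.le, rpow_natCast]
  have hPpos : 0 < P := by rw [hPeq]; positivity
  -- the derivative bound constant
  set K : ℝ := D * (3/2)^M * L^2 * P with hK
  have hKpos : 0 < K := by positivity
  -- the convex set for the mean value theorem
  set S : Set ℝ := Set.Icc (x - cJ - h/2) (x - cJ + h/2) with hS
  set g' : ℝ → ℂ := fun t => (w * Complex.exp (w*t)) * ((L:ℂ) * φ (L*t))
      + Complex.exp (w*t) * ((L:ℂ) * (L • deriv (φ : ℝ → ℂ) (L*t))) with hg'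
  have hder : ∀ t ∈ S, HasDerivWithinAt g (g' t) S t := fun t _ =>
    (kernel_hasDerivAt w L φ t).hasDerivWithinAt
  have hbound : ∀ t ∈ S, ‖g' t‖ ≤ K := by
    intro t ht
    have ht' : |t - (x - cJ)| ≤ h/2 := by
      rw [hS] at ht
      exact abs_le.mpr ⟨by linarith [ht.1], by linarith [ht.2]⟩
    have hxt : |x - cJ| ≤ |t| + h/2 := by
      have h1 := abs_sub_abs_le_abs_sub (x - cJ) t
      have h2' : |x - cJ - t| = |t - (x - cJ)| := abs_sub_comm _ _
      linarith
    have h15 : Q ≤ 3/2 * (1 + L*|t|) := by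
      have h3 : L * |x - cJ| ≤ L * (|t| + h/2) :=
        mul_le_mul_of_nonneg_left hxt hl.le
      have h4 : 0 ≤ L * |t| := mul_nonneg hl.le (abs_nonneg t)
      rw [hQ]
      nlinarith [hLh]
    have hpow : ((1 + L*|t|)^M)⁻¹ ≤ (3/2)^M * (Q^M)⁻¹ := by
      have ha1 : (0:ℝ) < (1 + L*|t|)^M := by positivity
      have ha2 : (0:ℝ) < Q^M := by positivity
      rw [← div_eq_mul_inv, le_div_iff₀ ha2, inv_mul_eq_div, div_le_iff₀ ha1]
      calc Q^M ≤ (3/2 * (1 + L*|t|))^M := pow_le_pow_left₀ hQpos.le h15 M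
        _ = (3/2)^M * (1 + L*|t|)^M := mul_pow _ _ _
    have hu : |L * t| = L * |t| := by
      rw [abs_mul, abs_of_pos hl]
    have hApt : ‖φ (L*t)‖ ≤ A * ((1 + L*|t|)^M)⁻¹ := by
      have h5 := hA (L*t)
      rw [hu] at h5
      have hp : (0:ℝ) < (1 + L*|t|)^M := by positivity
      calc ‖φ (L*t)‖ = ((1 + L*|t|)^M * ‖φ (L*t)‖) * ((1 + L*|t|)^M)⁻¹ := by
            field_simp
        _ ≤ A * ((1 + L*|t|)^M)⁻¹ := mul_le_mul_of_nonneg_right h5 (by positivity)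
    have hBpt : ‖deriv (φ : ℝ → ℂ) (L*t)‖ ≤ B * ((1 + L*|t|)^M)⁻¹ := by
      have h5 := hB' (L*t)
      rw [hu] at h5
      have hp : (0:ℝ) < (1 + L*|t|)^M := by positivity
      calc ‖deriv (φ : ℝ → ℂ) (L*t)‖
          = ((1 + L*|t|)^M * ‖deriv (φ : ℝ → ℂ) (L*t)‖) * ((1 + L*|t|)^M)⁻¹ := by
            field_simp
        _ ≤ B * ((1 + L*|t|)^M)⁻¹ := mul_le_mul_of_nonneg_right h5 (by positivity)
    have hkey := kernel_deriv_norm_le φ r L hl t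
    rw [← hw] at hkey
    have hDle : 3*π*A + B ≤ D := by rw [hD]; linarith
    calc ‖g' t‖ = ‖(w * Complex.exp (w*t)) * ((L:ℂ) * φ (L*t))
          + Complex.exp (w*t) * ((L:ℂ) * (L • deriv (φ : ℝ → ℂ) (L*t)))‖ := by rw [hg']
      _ ≤ |r| * (L * ‖φ (L*t)‖) + L * (L * ‖deriv (φ : ℝ → ℂ) (L*t)‖) := hkey
      _ ≤ (3*π*L) * (L * ‖φ (L*t)‖) + L * (L * ‖deriv (φ : ℝ → ℂ) (L*t)‖) := by
          have := mul_le_mul_of_nonneg_right hrabs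
            (mul_nonneg hl.le (norm_nonneg (φ (L*t))))
          linarith
      _ ≤ (3*π*L) * (L * (A * ((1 + L*|t|)^M)⁻¹)) + L * (L * (B * ((1 + L*|t|)^M)⁻¹)) := by
          have hm1 := mul_le_mul_of_nonneg_left hApt (by positivity : (0:ℝ) ≤ L)
          have hm2 := mul_le_mul_of_nonneg_left hBpt (by positivity : (0:ℝ) ≤ L)
          have hm3 := mul_le_mul_of_nonneg_left hm1 (by positivity : (0:ℝ) ≤ 3*π*L)
          have hm4 := mul_le_mul_of_nonneg_left hm2 (by positivity : (0:ℝ) ≤ L)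
          linarith
      _ = (3*π*A + B) * L^2 * ((1 + L*|t|)^M)⁻¹ := by ring
      _ ≤ (3*π*A + B) * L^2 * ((3/2)^M * (Q^M)⁻¹) :=
          mul_le_mul_of_nonneg_left hpow (by positivity)
      _ ≤ D * L^2 * ((3/2)^M * (Q^M)⁻¹) :=
          mul_le_mul_of_nonneg_right (mul_le_mul_of_nonneg_right hDle (by positivity))
            (by positivity)
      _ = K := by rw [hK, hPeq]; ring
  -- mean value estimate
  have hmvt : ∀ y ∈ Set.Icc (cJ - h/2) (cJ + h/2),
      ‖g (x - y) - g (x - cJ)‖ ≤ K * (h/2) := by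
    intro y hy
    have hyS : x - y ∈ S := by
      rw [hS]
      constructor
      · simp only [Set.mem_Icc] at hy; linarith [hy.2]
      · simp only [Set.mem_Icc] at hy; linarith [hy.1]
    have hcS : x - cJ ∈ S := by
      rw [hS]; constructor <;> [linarith; linarith]
    have hmv := (convex_Icc _ _).norm_image_sub_le_of_norm_hasDerivWithin_le
      hder hbound hcS hyS
    simp only [Set.mem_Icc] at hy
    calc ‖g (x - y) - g (x - cJ)‖ ≤ K * ‖(x - y) - (x - cJ)‖ := hmv
      _ = K * |cJ - y| := by
          rw [Real.norm_eq_abs, show x - y - (x - cJ) = cJ - y by ring]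
      _ ≤ K * (h/2) := by
          apply mul_le_mul_of_nonneg_left _ hKpos.le
          exact abs_le.mpr ⟨by linarith [hy.2], by linarith [hy.1]⟩
  -- zero outside the support
  have hfz : ∀ y, y ∉ Set.Icc (cJ - h/2) (cJ + h/2) → f y = 0 := by
    intro y hy
    by_contra hne
    exact hy (hsupp (Function.mem_support.mpr hne))
  -- rewrite the integrand
  have harg : ∀ y : ℝ, Complex.I * ((r * (x - y) : ℝ) : ℂ) = w * ((x - y : ℝ) : ℂ) := by
    intro y; rw [hw]; push_cast; ring
  have hgeq : (fun y => (Complex.exp (Complex.I * ((r * (x - y) : ℝ) : ℂ)) *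
      ((L : ℝ) : ℂ) * φ (L * (x - y))) * f y) = fun y => g (x - y) * f y := by
    funext y
    simp only [hg]
    rw [harg y]
  -- boundedness of g
  have hgbdd : ∀ t, ‖g t‖ ≤ L * A := by
    intro t
    have h1 := hA (L*t)
    have h2' : (1:ℝ) ≤ (1 + |L*t|)^M := one_le_pow₀ (by linarith [abs_nonneg (L*t)])
    have h3 : ‖φ (L*t)‖ ≤ A := by
      calc ‖φ (L*t)‖ = 1 * ‖φ (L*t)‖ := (one_mul _).symm
        _ ≤ (1 + |L*t|)^M * ‖φ (L*t)‖ :=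
            mul_le_mul_of_nonneg_right h2' (norm_nonneg _)
        _ ≤ A := h1
    have he : ‖Complex.exp (w * t)‖ = 1 := by
      rw [hw, show Complex.I * ((r:ℝ):ℂ) * (t:ℂ) = Complex.I * ((r*t : ℝ):ℂ) by
        push_cast; ring]
      exact exp_I_mul_real_norm (r*t)
    calc ‖g t‖ = ‖Complex.exp (w * t)‖ * ‖((L:ℝ):ℂ)‖ * ‖φ (L*t)‖ := by
          rw [hg]; simp only [norm_mul]
      _ = L * ‖φ (L*t)‖ := by
          rw [he, one_mul, Complex.norm_real, Real.norm_eq_abs, abs_of_pos hl]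
      _ ≤ L * A := mul_le_mul_of_nonneg_left h3 hl.le
  have hgcont : Continuous g := by
    rw [hg]
    exact ((Complex.continuous_exp.comp
      (continuous_const.mul Complex.continuous_ofReal)).mul continuous_const).mul
      (φ.continuous.comp (continuous_const.mul continuous_id))
  -- integrability
  have hm1 : AEStronglyMeasurable (fun y => g (x - y)) volume :=
    (hgcont.comp (continuous_const.sub continuous_id)).aestronglyMeasurable
  have hint1 : Integrable (fun y => g (x - y) * f y) :=
    hf.bdd_mul hm1 (Filter.Eventually.of_forall fun y => hgbdd (x - y))
  have hint2 : Integrable (fun y => g (x - cJ) * f y) := hf.const_mul _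
  have hzero : (∫ y, g (x - cJ) * f y) = 0 := by
    rw [integral_const_mul, hint0, mul_zero]
  have hsub : (∫ y, g (x - y) * f y) = ∫ y, (g (x - y) - g (x - cJ)) * f y := by
    rw [show (fun y => (g (x - y) - g (x - cJ)) * f y)
        = fun y => g (x - y) * f y - g (x - cJ) * f y from funext fun y => by ring,
      integral_sub hint1 hint2, hzero, sub_zero]
  -- the pointwise bound
  have hpt : ∀ y, ‖(g (x - y) - g (x - cJ)) * f y‖ ≤ K * (h/2) * ‖f y‖ := by
    intro y
    by_cases hy : y ∈ Set.Icc (cJ - h/2) (cJ + h/2)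
    · rw [norm_mul]
      exact mul_le_mul_of_nonneg_right (hmvt y hy) (norm_nonneg _)
    · rw [hfz y hy]
      simp only [mul_zero, norm_zero]
      positivity
  -- put things together
  have hnorm : ‖∫ y, g (x - y) * f y‖ ≤ K * (h/2) * ∫ y, ‖f y‖ := by
    rw [hsub, ← integral_const_mul]
    exact norm_integral_le_of_norm_le ((hf.norm).const_mul _)
      (Filter.Eventually.of_forall hpt)
  have hJint : (∫ y, ‖f y‖) = ∫ y in Set.Icc (cJ - h/2) (cJ + h/2), ‖f y‖ := by
    symm
    apply setIntegral_eq_integral_of_forall_compl_eq_zero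
    intro y hy
    rw [hfz y hy, norm_zero]
  rw [hJint] at hnorm
  set I : ℝ := ∫ y in Set.Icc (cJ - h/2) (cJ + h/2), ‖f y‖ with hI
  have hInn : 0 ≤ I := by
    rw [hI]
    exact integral_nonneg fun y => norm_nonneg _
  rw [hgeq]
  refine hnorm.trans ?_
  have hh2 : h^2 * h⁻¹ = h := by rw [sq, mul_assoc, mul_inv_cancel₀ hh.ne', mul_one]
  have hre : D * (3/2)^M * L^2 * h^2 * P * (h⁻¹ * I) = K * h * I := by
    calc D * (3/2)^M * L^2 * h^2 * P * (h⁻¹ * I)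
        = D * (3/2)^M * L^2 * P * (h^2 * h⁻¹) * I := by ring
      _ = K * h * I := by rw [hh2, hK]
  rw [hre]
  have hhalf : K * (h/2) * I ≤ K * h * I := by
    have := mul_nonneg (mul_nonneg hKpos.le hInn) hh.le
    nlinarith
  exact hhalf
end
end
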